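/- Let m ≥ 1, let M be a real symmetric positive-semidefinite m×m matrix, and let C(q,α,γ) ∈ ℝ for all indices 1 ≤ q, α, γ ≤ m be arbitrary real numbers. Define the matrix M# by M#_{qp} := Σ_{α,β,γ,δ} C(q,α,γ)·C(p,β,δ)·M_{αβ}·M_{γδ}. Then M# is a real symmetric positive-semidefinite m×m matrix. -/

import Mathlib

open BigOperators Kronecker Matrix

/-- Lemma 5.2: if `M` is a real symmetric positive semidefinite `m × m` matrix and the
structure constants `C(q,α,γ)` are real, then the matrix
`M#_{qp} = Σ C(q,α,γ)·C(p,β,δ)·M_{αβ}·M_{γδ}` is symmetric positive semidefinite. -/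
theorem sharp_posSemidef (m : ℕ) (hm : 1 ≤ m) (M : Matrix (Fin m) (Fin m) ℝ)
    (hM : M.PosSemidef) (C : Fin m → Fin m → Fin m → ℝ) :
    Matrix.PosSemidef (Matrix.of fun q p : Fin m =>
      ∑ α, ∑ β, ∑ γ, ∑ δ, C q α γ * C p β δ * M α β * M γ δ) := by
  obtain ⟨B, hB⟩ : ∃ B : Matrix (Fin m) (Fin m) ℝ, M = Bᴴ * B := by
    open scoped MatrixOrder in exact CStarAlgebra.nonneg_iff_eq_star_mul_self.mp hM.nonneg
  -- the Kronecker product M ⊗ M is PSD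
  have hK : Matrix.PosSemidef (M ⊗ₖ M) := by
    rw [hB, Matrix.mul_kronecker_mul]
    have : (Bᴴ ⊗ₖ Bᴴ) = (B ⊗ₖ B)ᴴ := by
      ext ⟨i, j⟩ ⟨k, l⟩
      simp [Matrix.conjTranspose_apply, Matrix.kroneckerMap_apply]
    rw [this]
    exact Matrix.posSemidef_conjTranspose_mul_self _
  -- the framing matrix
  set N : Matrix (Fin m) (Fin m × Fin m) ℝ :=
    Matrix.of fun q p => C q p.1 p.2 with hN
  have h := hK.mul_mul_conjTranspose_same N
  convert h using 2
  ext q p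
  simp only [Matrix.of_apply, Matrix.mul_apply, Matrix.conjTranspose_apply,
    Matrix.kroneckerMap_apply, hN, star_trivial, Fintype.sum_prod_type]
  simp only [Finset.sum_mul]
  rw [Finset.sum_comm]
  refine Finset.sum_congr rfl fun β _ => ?_
  refine Eq.trans (Finset.sum_congr rfl fun α _ => Finset.sum_comm) ?_
  rw [Finset.sum_comm]
  refine Finset.sum_congr rfl fun δ _ => ?_
  refine Finset.sum_congr rfl fun α _ => ?_
  refine Finset.sum_congr rfl fun γ _ => ?_
  ring
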